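/- Let E be an isotropic subspace of V × V*, and set Σ = pr_{V*} E, Σ′ = pr_{V*} E^⊥, S = ann_V Σ, S′ = ann_V Σ′. Then there exists a skew linear map Π : V* → V such that E = {(Πα + Z, α) : α ∈ Σ, Z ∈ S′} and E^⊥ = {(Πβ + W, β) : β ∈ Σ′, W ∈ S}. -/

import Mathlib

open Module LinearMap

set_option maxHeartbeats 1000000

/-- The pairing metric `g((X,α),(Y,β)) = (1/2)(α(Y) + β(X))` on `V × V*`. -/
noncomputable def bigG (V : Type*) [AddCommGroup V] [Module ℝ V] :
    LinearMap.BilinForm ℝ (V × Module.Dual ℝ V) :=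
  LinearMap.mk₂ ℝ (fun p q => (1 / 2 : ℝ) * (p.2 q.1 + q.2 p.1))
    (fun p p' q => by simp; ring)
    (fun c p q => by simp; ring)
    (fun p q q' => by simp; ring)
    (fun c p q => by simp; ring)

/-- The `g`-orthogonal complement of a subspace of `V × V*`. -/
noncomputable def gOrth {V : Type*} [AddCommGroup V] [Module ℝ V]
    (E : Submodule ℝ (V × Module.Dual ℝ V)) : Submodule ℝ (V × Module.Dual ℝ V) :=
  LinearMap.BilinForm.orthogonal (bigG V) E

/-- For an isotropic `E`, with `Σ = pr_{V*}E`, `Σ′ = pr_{V*}E^⊥`, `S = ann_V Σ`,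
`S′ = ann_V Σ′`, there is a skew map `Π : V* → V` with
`E = {(Πα + Z, α) : α ∈ Σ, Z ∈ S′}` and `E^⊥ = {(Πβ + W, β) : β ∈ Σ′, W ∈ S}`. -/
theorem stmt9 (V : Type*) [AddCommGroup V] [Module ℝ V] [FiniteDimensional ℝ V]
    (E : Submodule ℝ (V × Dual ℝ V))
    (hiso : ∀ p ∈ E, ∀ q ∈ E, bigG V p q = 0)
    (Sgm Sgm' : Submodule ℝ (Dual ℝ V)) (S S' : Submodule ℝ V)
    (hSgm : Sgm = Submodule.map (LinearMap.snd ℝ V (Dual ℝ V)) E)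
    (hSgm' : Sgm' = Submodule.map (LinearMap.snd ℝ V (Dual ℝ V)) (gOrth E))
    (hS : S = Sgm.dualCoannihilator) (hS' : S' = Sgm'.dualCoannihilator) :
    ∃ Pi : Dual ℝ V →ₗ[ℝ] V,
      (∀ α β : Dual ℝ V, β (Pi α) = -α (Pi β)) ∧
      (E : Set (V × Dual ℝ V)) =
        {p : V × Dual ℝ V | ∃ α ∈ Sgm, ∃ Z ∈ S', p = (Pi α + Z, α)} ∧
      (gOrth E : Set (V × Dual ℝ V)) =
        {p : V × Dual ℝ V | ∃ β ∈ Sgm', ∃ W ∈ S, p = (Pi β + W, β)} := by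
  classical
  -- value of bigG
  have hbG : ∀ p q : V × Dual ℝ V, bigG V p q = (1/2 : ℝ) * (p.2 q.1 + q.2 p.1) := by
    intro p q; rfl
  have hGmem : ∀ q : V × Dual ℝ V, q ∈ gOrth E ↔ ∀ p ∈ E, bigG V p q = 0 := by
    intro q; exact LinearMap.BilinForm.mem_orthogonal_iff
  -- a linear section σ : Sgm → V with (σ α, α) ∈ E
  have hfsurj : LinearMap.range
      (((LinearMap.snd ℝ V (Dual ℝ V)).comp E.subtype).codRestrict Sgm
        (fun p => hSgm ▸ Submodule.mem_map_of_mem p.2)) = ⊤ := by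
    rw [LinearMap.range_eq_top]
    rintro ⟨α, hα⟩
    rw [hSgm] at hα
    obtain ⟨p, hp, hpα⟩ := hα
    exact ⟨⟨p, hp⟩, Subtype.ext hpα⟩
  haveI : Module.Projective ℝ Sgm := Module.Projective.of_basis (Basis.ofVectorSpace ℝ Sgm)
  obtain ⟨s, hs⟩ := LinearMap.exists_rightInverse_of_surjective _ hfsurj
  set σ : Sgm →ₗ[ℝ] V :=
    (LinearMap.fst ℝ V (Dual ℝ V)).comp (E.subtype.comp s) with hσdef
  have hsnd : ∀ a : Sgm, ((s a : V × Dual ℝ V)).2 = (a : Dual ℝ V) := by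
    intro a
    have := congrArg (fun f => ((f a : Sgm) : Dual ℝ V)) hs
    simpa using this
  have hE : ∀ a : Sgm, ((σ a, (a : Dual ℝ V)) : V × Dual ℝ V) ∈ E := by
    intro a
    have h1 : ((s a : V × Dual ℝ V)) = (σ a, (a : Dual ℝ V)) :=
      Prod.ext rfl (hsnd a)
    rw [← h1]; exact (s a).2
  -- skewness on Sgm from isotropy
  have hsk : ∀ a b : Sgm, (b : Dual ℝ V) (σ a) + (a : Dual ℝ V) (σ b) = 0 := by
    intro a b
    have := hiso _ (hE a) _ (hE b)
    rw [hbG] at this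
    simp at this
    linarith
  -- projection P onto Sgm
  obtain ⟨P, hP⟩ := LinearMap.exists_leftInverse_of_injective (K := ℝ) (V := Sgm) (V' := Dual ℝ V) Sgm.subtype Sgm.ker_subtype
  have hPid : ∀ a : Sgm, P (a : Dual ℝ V) = a := by
    intro a
    have := congrArg (fun f => (f a : Sgm)) hP
    simpa using this
  -- the skew map Π via the double dual
  set ω : Dual ℝ V →ₗ[ℝ] Dual ℝ (Dual ℝ V) :=
    LinearMap.mk₂ ℝ
      (fun ξ η => η (σ (P ξ)) - ξ (σ (P η)) - (P η : Dual ℝ V) (σ (P ξ)))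
      (fun ξ ξ' η => by simp; ring)
      (fun c ξ η => by simp; ring)
      (fun ξ η η' => by simp; ring)
      (fun c ξ η => by simp; ring) with hωdef
  have hωapp : ∀ ξ η : Dual ℝ V,
      ω ξ η = η (σ (P ξ)) - ξ (σ (P η)) - (P η : Dual ℝ V) (σ (P ξ)) := by
    intro ξ η; rfl
  set Pi : Dual ℝ V →ₗ[ℝ] V :=
    ((Module.evalEquiv ℝ V).symm.toLinearMap).comp ω with hPidef
  have hPia : ∀ (ξ β : Dual ℝ V), β (Pi ξ) = ω ξ β := by
    intro ξ β
    exact Module.apply_evalEquiv_symm_apply ℝ V β (ω ξ)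
  have hskew : ∀ α β : Dual ℝ V, β (Pi α) = -α (Pi β) := by
    intro α β
    rw [hPia, hPia, hωapp, hωapp]
    have := hsk (P α) (P β)
    linarith
  have hPis : ∀ a : Sgm, Pi (a : Dual ℝ V) = σ a := by
    intro a
    rw [← sub_eq_zero, ← Module.forall_dual_apply_eq_zero_iff ℝ]
    intro φ
    rw [map_sub, hPia, hωapp, hPid]
    have := hsk a (P φ)
    linarith
  -- E₀ ⊆ S'
  have hE₀ : ∀ Z : V, ((Z, 0) : V × Dual ℝ V) ∈ E → Z ∈ S' := by
    intro Z hZ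
    rw [hS', Submodule.mem_dualCoannihilator]
    intro φ hφ
    rw [hSgm'] at hφ
    obtain ⟨q, hq, hqφ⟩ := hφ
    have := (hGmem q).1 hq _ hZ
    rw [hbG] at this
    simp at this
    rw [← hqφ]
    exact this
  -- S' ⊆ E₀ via the double orthogonal complement
  have hsymm : ∀ p q : V × Dual ℝ V, bigG V p q = bigG V q p := by
    intro p q; rw [hbG, hbG]; ring
  have hrefl : (bigG V).IsRefl := by
    intro p q h; rw [hsymm]; exact h
  have hnd : (bigG V).Nondegenerate := by
    refine LinearMap.IsRefl.nondegenerate_iff_separatingLeft hrefl |>.mpr ?_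
    intro p hp
    have h1 : p.2 = 0 := by
      ext Y
      have := hp (Y, 0)
      rw [hbG] at this
      have h0 : (((Y, (0 : Dual ℝ V))).2) p.1 = 0 := rfl
      rw [h0, add_zero] at this
      show p.2 Y = (0 : Dual ℝ V) Y
      rw [LinearMap.zero_apply]
      linarith
    have h2 : p.1 = 0 := by
      rw [← Module.forall_dual_apply_eq_zero_iff ℝ]
      intro φ
      have := hp (0, φ)
      rw [hbG] at this
      rw [show p.2 (0 : V) = 0 from map_zero _, zero_add] at this
      linarith
    exact Prod.ext h2 h1
  have hEoo : gOrth (gOrth E) = E :=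
    LinearMap.BilinForm.orthogonal_orthogonal hnd hrefl E
  have hS'E : ∀ Z ∈ S', ((Z, 0) : V × Dual ℝ V) ∈ E := by
    intro Z hZ
    rw [← hEoo]
    refine LinearMap.BilinForm.mem_orthogonal_iff.mpr ?_
    intro q hq
    rw [hbG]
    have hq2 : q.2 ∈ Sgm' := hSgm' ▸ Submodule.mem_map_of_mem hq
    rw [hS', Submodule.mem_dualCoannihilator] at hZ
    have h0 : (((Z, (0 : Dual ℝ V))).2) q.1 = 0 := rfl
    rw [h0, add_zero, hZ q.2 hq2, mul_zero]
  -- description of E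
  have hEdesc : (E : Set (V × Dual ℝ V)) =
      {p : V × Dual ℝ V | ∃ α ∈ Sgm, ∃ Z ∈ S', p = (Pi α + Z, α)} := by
    ext p
    constructor
    · intro hp
      have hα : p.2 ∈ Sgm := hSgm ▸ Submodule.mem_map_of_mem hp
      set a : Sgm := ⟨p.2, hα⟩ with ha
      have hz : ((p.1 - σ a, 0) : V × Dual ℝ V) ∈ E := by
        have h2 := E.sub_mem hp (hE a)
        have h3 : p - ((σ a, (a : Dual ℝ V)) : V × Dual ℝ V)
            = ((p.1 - σ a, 0) : V × Dual ℝ V) := Prod.ext rfl (sub_self p.2)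
        rwa [h3] at h2
      refine ⟨p.2, hα, p.1 - σ a, hE₀ _ hz, ?_⟩
      have : Pi p.2 = σ a := hPis a
      rw [this]
      simp [Prod.ext_iff]
    · rintro ⟨α, hα, Z, hZ, rfl⟩
      have h1 : ((Pi α + Z, α) : V × Dual ℝ V)
          = ((σ ⟨α, hα⟩, ((⟨α, hα⟩ : Sgm) : Dual ℝ V)) : V × Dual ℝ V) + (Z, 0) := by
        have : Pi α = σ ⟨α, hα⟩ := hPis ⟨α, hα⟩
        simp [Prod.ext_iff, this]
      show ((Pi α + Z, α) : V × Dual ℝ V) ∈ E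
      rw [h1]
      exact E.add_mem (hE _) (hS'E Z hZ)
  refine ⟨Pi, hskew, hEdesc, ?_⟩
  ext q
  constructor
  · intro hq
    have hβ : q.2 ∈ Sgm' := hSgm' ▸ Submodule.mem_map_of_mem hq
    refine ⟨q.2, hβ, q.1 - Pi q.2, ?_, by simp [Prod.ext_iff]⟩
    rw [hS, Submodule.mem_dualCoannihilator]
    intro φ hφ
    have h1 := (hGmem q).1 hq _ (hE ⟨φ, hφ⟩)
    rw [hbG] at h1
    simp at h1
    have h2 : q.2 (σ ⟨φ, hφ⟩) = -φ (Pi q.2) := by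
      rw [← hPis ⟨φ, hφ⟩]; exact hskew φ q.2
    simp [map_sub]
    linarith
  · rintro ⟨β, hβ, W, hW, rfl⟩
    rw [SetLike.mem_coe, hGmem]
    intro p hp
    have hpd := hEdesc ▸ (show p ∈ (E : Set (V × Dual ℝ V)) from hp)
    obtain ⟨α, hα, Z, hZ, rfl⟩ := hpd
    rw [hbG]
    simp only
    have h1 : α (Pi β) = -β (Pi α) := by
      have := hskew β α; linarith [hskew β α]
    have h2 : α W = 0 := by
      rw [hS, Submodule.mem_dualCoannihilator] at hW
      exact hW α hα
    have h3 : β Z = 0 := by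
      rw [hS', Submodule.mem_dualCoannihilator] at hZ
      exact hZ β hβ
    simp [map_add, h1, h2, h3]
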